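/- Fix λ = (λⱼ)_{j=0}^{m} with λⱼ ∈ (−1,1)\{0} and a probability vector p = (pⱼ)_{j=0}^{m} with positive entries. For t ∈ (ℝ^d)^m let μ_t be the self-similar measure of Φ_t and p, and let ν_t^{(n)} = Σ_{w∈Λⁿ} p_w δ_{φ_{t,w}} be the induced measure on the affine group. Then dim μ_t ≤ (1/(χn)) H(ν_t^{(n)}) for every n ≥ 1, where χ = −Σⱼ pⱼ log|λⱼ|. -/

import Mathlib

open MeasureTheory

/-- Composition along a word `w` of the IFS on `ℝ^d` with maps `φ_{t,0}(x) = lam 0 • x` and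
`φ_{t,j}(x) = lam j • x + t j` for `1 ≤ j ≤ m`. -/
def compIFSd {d m n : ℕ} (lam : Fin (m + 1) → ℝ) (t : Fin m → Fin d → ℝ)
    (w : Fin n → Fin (m + 1)) : (Fin d → ℝ) → (Fin d → ℝ) :=
  (List.ofFn w).foldr (fun j f => (fun x => lam j • x + Fin.cases 0 t j) ∘ f) id

/-- Shannon entropy (base 2) of the pushforward of the weights `p` by the map `key`. -/
noncomputable def pushEntropy {α β : Type*} [Fintype α] (p : α → ℝ) (key : α → β) : ℝ :=
  letI := Classical.decEq β
  ∑ b ∈ Finset.image key Finset.univ,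
    -((∑ a ∈ Finset.univ.filter fun a => key a = b, p a) *
      Real.logb 2 (∑ a ∈ Finset.univ.filter fun a => key a = b, p a))

namespace St10

def foldComp {J E : Type*} (f : J → E → E) {k : ℕ} (σ : Fin k → J) : E → E :=
  (List.ofFn σ).foldr (fun j F => f j ∘ F) id

lemma foldComp_succ {J E : Type*} (f : J → E → E) {k : ℕ} (σ : Fin (k+1) → J) :
    foldComp f σ = f (σ 0) ∘ foldComp f (fun i => σ i.succ) := by
  simp [foldComp, List.ofFn_succ]

lemma sum_pi_cons {J M : Type*} [AddCommMonoid M] [Fintype J] (k : ℕ)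
    (F : (Fin (k+1) → J) → M) :
    ∑ σ : Fin (k+1) → J, F σ = ∑ j : J, ∑ σ : Fin k → J, F (Fin.cons j σ) := by
  rw [← (Fintype.sum_equiv (Fin.consEquiv (fun _ => J)) _ (fun σ => F σ) (fun x => rfl))]
  rw [Fintype.sum_prod_type]
  rfl

section affs
variable {E : Type*} [NormedAddCommGroup E] [NormedSpace ℝ E]

def IsAff (ρ : ℝ) (f : E → E) : Prop := ∃ c, ∀ x, f x = ρ • x + c

lemma isAff_id : IsAff (1:ℝ) (id : E → E) := ⟨0, fun x => by simp⟩

lemma IsAff.comp {ρ ρ' : ℝ} {f f' : E → E} (h : IsAff ρ f) (h' : IsAff ρ' f') :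
    IsAff (ρ * ρ') (f ∘ f') := by
  obtain ⟨c, hc⟩ := h; obtain ⟨c', hc'⟩ := h'
  exact ⟨ρ • c' + c, fun x => by simp [hc, hc', mul_smul, smul_add, add_assoc]⟩

lemma isAff_foldComp {J : Type*} {r : J → ℝ} {f : J → E → E}
    (hf : ∀ j, IsAff (r j) (f j)) : ∀ {k : ℕ} (σ : Fin k → J),
    IsAff (∏ i, r (σ i)) (foldComp f σ) := by
  intro k
  induction k with
  | zero => intro σ; simpa [foldComp] using (isAff_id : IsAff (1:ℝ) (id : E → E))
  | succ k ih =>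
    intro σ
    rw [foldComp_succ, Fin.prod_univ_succ]
    exact (hf (σ 0)).comp (ih _)

lemma IsAff.continuous {ρ : ℝ} {f : E → E} (h : IsAff ρ f) : Continuous f := by
  obtain ⟨c, hc⟩ := h
  have : f = fun x => ρ • x + c := funext hc
  rw [this]; fun_prop

lemma IsAff.dist_eq {ρ : ℝ} {f : E → E} (h : IsAff ρ f) (x y : E) :
    dist (f x) (f y) = |ρ| * dist x y := by
  obtain ⟨c, hc⟩ := h
  simp only [hc, dist_eq_norm, add_sub_add_right_eq_sub, ← smul_sub, norm_smul,
    Real.norm_eq_abs]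

lemma IsAff.cball_subset {ρ R : ℝ} {f : E → E} (h : IsAff ρ f) (hρ : ρ ≠ 0)
    {z : E} (hz : ‖z‖ ≤ R) (hR : 0 < R) :
    Metric.closedBall (0:E) R ⊆ f ⁻¹' Metric.ball (f z) (3 * R * |ρ|) := by
  intro y hy
  simp only [Metric.mem_closedBall, dist_zero_right] at hy
  simp only [Set.mem_preimage, Metric.mem_ball, h.dist_eq]
  have h1 : dist y z ≤ 2 * R := by
    calc dist y z ≤ ‖y‖ + ‖z‖ := dist_le_norm_add_norm y z
    _ ≤ 2 * R := by linarith
  have hρ' : 0 < |ρ| := abs_pos.mpr hρ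
  calc |ρ| * dist y z ≤ |ρ| * (2*R) := by gcongr
  _ < 3 * R * |ρ| := by nlinarith

end affs

section meas
variable {E J : Type*} [MeasurableSpace E] [Fintype J]

lemma decomp_eval (μ : Measure E) (c : J → ℝ) (hc : ∀ j, 0 ≤ c j) (f : J → E → E)
    (hf : ∀ j, Measurable (f j))
    (hμ : μ = ∑ j, ENNReal.ofReal (c j) • Measure.map (f j) μ) :
    ∀ (k : ℕ) (S : Set E), MeasurableSet S →
      μ S = ∑ σ : Fin k → J, ENNReal.ofReal (∏ i, c (σ i)) * μ ((foldComp f σ) ⁻¹' S) := by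
  intro k
  induction k with
  | zero =>
    intro S hS
    simp [foldComp]
  | succ k ih =>
    intro S hS
    rw [sum_pi_cons]
    have step : μ S = ∑ j, ENNReal.ofReal (c j) * μ ((f j) ⁻¹' S) := by
      conv_lhs => rw [hμ]
      rw [Measure.finset_sum_apply]
      refine Finset.sum_congr rfl (fun j _ => ?_)
      rw [Measure.smul_apply, Measure.map_apply (hf j) hS, smul_eq_mul]
    rw [step]
    refine Finset.sum_congr rfl (fun j _ => ?_)
    rw [ih ((f j) ⁻¹' S) ((hf j) hS), Finset.mul_sum]
    refine Finset.sum_congr rfl (fun σ _ => ?_)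
    rw [Fin.prod_univ_succ]
    simp only [Fin.cons_zero, Fin.cons_succ]
    rw [ENNReal.ofReal_mul (hc j), foldComp_succ]
    simp only [Fin.cons_zero, Fin.cons_succ, Set.preimage_comp]
    ring

omit [Fintype J] in
lemma iter_lower (μ : Measure E) (Q : J → ℝ) (hQ : ∀ b, 0 ≤ Q b) (g : J → E → E)
    (hg : ∀ b, Measurable (g b))
    (h1 : ∀ (b : J) (S : Set E), MeasurableSet S →
      ENNReal.ofReal (Q b) * μ ((g b) ⁻¹' S) ≤ μ S) :
    ∀ (k : ℕ) (σ : Fin k → J) (S : Set E), MeasurableSet S →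
      ENNReal.ofReal (∏ i, Q (σ i)) * μ ((foldComp g σ) ⁻¹' S) ≤ μ S := by
  intro k
  induction k with
  | zero => intro σ S hS; simp [foldComp]
  | succ k ih =>
    intro σ S hS
    have h2 := ih (fun i => σ i.succ) ((g (σ 0)) ⁻¹' S) ((hg _) hS)
    have h3 := h1 (σ 0) S hS
    rw [Fin.prod_univ_succ, ENNReal.ofReal_mul (hQ _), foldComp_succ, Set.preimage_comp,
      mul_assoc]
    exact le_trans (mul_le_mul_right h2 _) h3
end meas

section cheb
variable {J : Type*} [Fintype J] (c : J → ℝ)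

lemma wt_sum (hc1 : ∑ j, c j = 1) :
    ∀ k : ℕ, ∑ σ : Fin k → J, ∏ i, c (σ i) = 1 := by
  intro k
  induction k with
  | zero => simp
  | succ k ih =>
    rw [sum_pi_cons]
    have : ∀ j : J, ∑ σ : Fin k → J, ∏ i, c ((Fin.cons j σ : Fin (k+1) → J) i)
        = c j * ∑ σ : Fin k → J, ∏ i, c (σ i) := by
      intro j
      rw [Finset.mul_sum]
      refine Finset.sum_congr rfl (fun σ _ => ?_)
      rw [Fin.prod_univ_succ]
      simp
    simp_rw [this, ih, mul_one, hc1]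

lemma moment2 (hc1 : ∑ j, c j = 1) (Y : J → ℝ) (hY : ∑ j, c j * Y j = 0) :
    ∀ k : ℕ, ∑ σ : Fin k → J, (∏ i, c (σ i)) * (∑ i, Y (σ i))^2
      = k * ∑ j, c j * (Y j)^2 := by
  intro k
  induction k with
  | zero => simp
  | succ k ih =>
    rw [sum_pi_cons]
    have key : ∀ j : J, ∑ σ : Fin k → J, (∏ i, c ((Fin.cons j σ : Fin (k+1) → J) i)) * (∑ i, Y ((Fin.cons j σ : Fin (k+1) → J) i))^2
        = c j * (Y j)^2 * (∑ σ : Fin k → J, ∏ i, c (σ i))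
          + 2 * (c j * Y j) * (∑ σ : Fin k → J, (∏ i, c (σ i)) * (∑ i, Y (σ i)))
          + c j * (∑ σ : Fin k → J, (∏ i, c (σ i)) * (∑ i, Y (σ i))^2) := by
      intro j
      rw [Finset.mul_sum, Finset.mul_sum, Finset.mul_sum, ← Finset.sum_add_distrib,
        ← Finset.sum_add_distrib]
      refine Finset.sum_congr rfl (fun σ _ => ?_)
      rw [Fin.prod_univ_succ, Fin.sum_univ_succ]
      simp only [Fin.cons_zero, Fin.cons_succ]
      ring
    simp_rw [key]
    rw [Finset.sum_add_distrib, Finset.sum_add_distrib]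
    rw [wt_sum c hc1 k]
    simp_rw [mul_one]
    have e1 : ∑ i : J, 2 * (c i * Y i) = 0 := by
      rw [← Finset.mul_sum, hY, mul_zero]
    rw [← Finset.sum_mul, ← Finset.sum_mul, e1, hc1, zero_mul, add_zero, one_mul, ih]
    push_cast
    ring

lemma chebyshev (hc0 : ∀ j, 0 ≤ c j) (hc1 : ∑ j, c j = 1) (X : J → ℝ) (k : ℕ) (hk : 1 ≤ k)
    {δ : ℝ} (hδ : 0 < δ) :
    ∑ σ ∈ Finset.univ.filter
        (fun σ : Fin k → J => k * δ < |∑ i, X (σ i) - k * (∑ j, c j * X j)|),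
      ∏ i, c (σ i)
    ≤ (∑ j, c j * (X j - ∑ j', c j' * X j')^2) / (k * δ^2) := by
  set Ex := ∑ j', c j' * X j' with hEx
  set Y := fun j => X j - Ex with hYdef
  have hY0 : ∑ j, c j * Y j = 0 := by
    simp only [hYdef, mul_sub, Finset.sum_sub_distrib, ← Finset.sum_mul, hc1]
    ring
  have hsum : ∀ σ : Fin k → J, ∑ i, X (σ i) - k * Ex = ∑ i, Y (σ i) := by
    intro σ
    simp [hYdef, Finset.sum_sub_distrib, mul_comm]
  have hkpos : (0:ℝ) < k := by exact_mod_cast hk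
  have step1 : ∀ σ ∈ Finset.univ.filter
      (fun σ : Fin k → J => k * δ < |∑ i, X (σ i) - k * Ex|),
      ∏ i, c (σ i) ≤ (∏ i, c (σ i)) * ((∑ i, Y (σ i))^2 / (k * δ)^2) := by
    intro σ hσ
    rw [Finset.mem_filter] at hσ
    have h1 : (k * δ)^2 < (∑ i, Y (σ i))^2 := by
      rw [← hsum]
      have := sq_abs (∑ i, X (σ i) - k * Ex)
      nlinarith [hσ.2, mul_pos hkpos hδ]
    have h2 : (1:ℝ) ≤ (∑ i, Y (σ i))^2 / (k * δ)^2 := by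
      rw [le_div_iff₀ (by positivity)]
      linarith
    have hpn : (0:ℝ) ≤ ∏ i, c (σ i) := Finset.prod_nonneg (fun i _ => hc0 (σ i))
    nlinarith [hpn, h2]
  calc ∑ σ ∈ Finset.univ.filter
        (fun σ : Fin k → J => k * δ < |∑ i, X (σ i) - k * Ex|), ∏ i, c (σ i)
      ≤ ∑ σ ∈ Finset.univ.filter
        (fun σ : Fin k → J => k * δ < |∑ i, X (σ i) - k * Ex|),
          (∏ i, c (σ i)) * ((∑ i, Y (σ i))^2 / (k * δ)^2) := Finset.sum_le_sum step1
    _ ≤ ∑ σ : Fin k → J, (∏ i, c (σ i)) * ((∑ i, Y (σ i))^2 / (k * δ)^2) := by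
        refine Finset.sum_le_sum_of_subset_of_nonneg (Finset.filter_subset _ _) ?_
        intro σ _ _
        have hpn : (0:ℝ) ≤ ∏ i, c (σ i) := Finset.prod_nonneg (fun i _ => hc0 (σ i))
        positivity
    _ = (∑ σ : Fin k → J, (∏ i, c (σ i)) * (∑ i, Y (σ i))^2) / (k * δ)^2 := by
        rw [Finset.sum_div]
        refine Finset.sum_congr rfl (fun σ _ => ?_)
        ring
    _ = (k * ∑ j, c j * (Y j)^2) / (k * δ)^2 := by rw [moment2 c hc1 Y hY0 k]
    _ = (∑ j, c j * (X j - Ex)^2) / (k * δ^2) := by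
        field_simp
        ring
end cheb

lemma entropy_group {α β : Type*} [Fintype α] [DecidableEq β] (P : α → ℝ) (key : α → β) :
    pushEntropy P key
      = -∑ a, P a * Real.logb 2 (∑ a' ∈ Finset.univ.filter fun a' => key a' = key a, P a') := by
  classical
  unfold pushEntropy
  rw [← Finset.sum_neg_distrib]
  have := Finset.sum_image' (s := (Finset.univ : Finset α)) (g := key)
    (f := fun b => -((∑ a ∈ Finset.univ.filter fun a => key a = b, P a) *
      Real.logb 2 (∑ a ∈ Finset.univ.filter fun a => key a = b, P a)))
    (fun a => -(P a * Real.logb 2 (∑ a' ∈ Finset.univ.filter fun a' => key a' = key a, P a')))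
    ?_
  · convert this using 2 <;> congr!
  · intro a _
    have hconst : ∀ a' ∈ Finset.univ.filter fun a' => key a' = key a,
        -(P a' * Real.logb 2 (∑ a'' ∈ Finset.univ.filter fun a'' => key a'' = key a', P a''))
        = P a' * (-(Real.logb 2 (∑ a'' ∈ Finset.univ.filter fun a'' => key a'' = key a, P a''))) := by
      intro a' ha'
      rw [Finset.mem_filter] at ha'
      rw [ha'.2]
      ring
    rw [Finset.sum_congr rfl hconst, ← Finset.sum_mul]
    ring

lemma exp_coord {Λ : Type*} [Fintype Λ] [DecidableEq Λ] (p : Λ → ℝ) (hp1 : ∑ j, p j = 1)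
    {n : ℕ} (i : Fin n) (f : Λ → ℝ) :
    ∑ b : Fin n → Λ, (∏ l, p (b l)) * f (b i) = ∑ j, p j * f j := by
  classical
  have e1 : ∀ b : Fin n → Λ, (∏ l, p (b l)) * f (b i)
      = ∏ l, (p (b l) * if l = i then f (b l) else 1) := by
    intro b
    rw [Finset.prod_mul_distrib, Finset.prod_ite_eq' Finset.univ i (fun l => f (b l))]
    simp
  simp_rw [e1]
  have e2 := Finset.prod_univ_sum (t := fun _ : Fin n => (Finset.univ : Finset Λ))
    (f := fun l j => p j * if l = i then f j else 1)
  rw [Fintype.piFinset_univ] at e2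
  rw [← e2]
  have e3 : ∀ l : Fin n, (∑ j, (p j * if l = i then f j else 1))
      = if l = i then ∑ j, p j * f j else 1 := by
    intro l
    split <;> simp [hp1]
  simp_rw [e3]
  rw [Finset.prod_ite_eq' Finset.univ i (fun _ => ∑ j, p j * f j)]
  simp

end St10

set_option maxHeartbeats 2000000 in
theorem stmt10 (d m : ℕ) (hd : 1 ≤ d) (hm : 1 ≤ m)
    (lam : Fin (m + 1) → ℝ) (hlam : ∀ j, lam j ≠ 0 ∧ |lam j| < 1)
    (p : Fin (m + 1) → ℝ) (hp : ∀ j, 0 < p j) (hp1 : ∑ j, p j = 1)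
    (t : Fin m → Fin d → ℝ) (χ : ℝ) (hχ : χ = -∑ j, p j * Real.logb 2 |lam j|)
    (μ : Measure (Fin d → ℝ)) [IsProbabilityMeasure μ]
    (hss : μ = ∑ j, ENNReal.ofReal (p j) •
      Measure.map (fun x => lam j • x + Fin.cases 0 t j) μ)
    (D : ℝ)
    (hdim : ∀ᵐ x ∂μ, Filter.Tendsto
      (fun δ : ℝ => Real.logb 2 (μ (Metric.ball x δ)).toReal / Real.logb 2 δ)
      (nhdsWithin 0 (Set.Ioi 0)) (nhds D)) :
    ∀ n : ℕ, 1 ≤ n →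
      D ≤ (1 / (χ * n)) *
        pushEntropy (fun w : Fin n → Fin (m + 1) => ∏ i, p (w i))
          (fun w => compIFSd lam t w) := by
  classical
  intro n hn
  have hnR : (1:ℝ) ≤ n := by exact_mod_cast hn
  -- the basic IFS maps are affine
  have hφaff : ∀ j : Fin (m+1), St10.IsAff (lam j)
      (fun x : Fin d → ℝ => lam j • x + Fin.cases 0 t j) :=
    fun j => ⟨Fin.cases 0 t j, fun x => rfl⟩
  have hφmeas : ∀ j : Fin (m+1), Measurable
      (fun x : Fin d → ℝ => lam j • x + Fin.cases 0 t j) :=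
    fun j => (hφaff j).continuous.measurable
  have hfoldIFS : ∀ w : Fin n → Fin (m+1), compIFSd lam t w
      = St10.foldComp (fun j (x : Fin d → ℝ) => lam j • x + Fin.cases 0 t j) w :=
    fun w => rfl
  set ρr : (Fin n → Fin (m+1)) → ℝ := fun b => ∏ i, lam (b i) with hρdef
  have hρ0 : ∀ b, ρr b ≠ 0 := by
    intro b
    rw [hρdef]
    exact Finset.prod_ne_zero_iff.mpr fun i _ => (hlam (b i)).1
  have hgaff : ∀ b, St10.IsAff (ρr b) (compIFSd lam t b) := by
    intro b
    rw [hρdef, hfoldIFS]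
    exact St10.isAff_foldComp hφaff b
  have hgmeas : ∀ b, Measurable (compIFSd lam t b) :=
    fun b => (hgaff b).continuous.measurable
  set Pb : (Fin n → Fin (m+1)) → ℝ := fun w => ∏ i, p (w i) with hPbdef
  set H : ℝ := pushEntropy Pb (fun w => compIFSd lam t w) with hHdef
  have hPb0 : ∀ b, 0 < Pb b := by
    intro b
    rw [hPbdef]
    exact Finset.prod_pos fun i _ => hp _
  have hPb1 : ∑ b, Pb b = 1 := by
    rw [hPbdef]
    exact St10.wt_sum p hp1 n
  set Q : (Fin n → Fin (m+1)) → ℝ := fun b =>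
    ∑ b' ∈ Finset.univ.filter (fun b' => compIFSd lam t b' = compIFSd lam t b), Pb b'
    with hQdef
  have hQpos : ∀ b, 0 < Q b := by
    intro b
    rw [hQdef]
    exact Finset.sum_pos (fun b' _ => hPb0 b') ⟨b, by simp⟩
  have hQle1 : ∀ b, Q b ≤ 1 := by
    intro b
    rw [hQdef]
    calc ∑ b' ∈ Finset.univ.filter (fun b' => compIFSd lam t b' = compIFSd lam t b), Pb b'
        ≤ ∑ b', Pb b' := Finset.sum_le_sum_of_subset_of_nonneg (Finset.filter_subset _ _)
          (fun b' _ _ => (hPb0 b').le)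
      _ = 1 := hPb1
  have hdecn : ∀ S : Set (Fin d → ℝ), MeasurableSet S →
      μ S = ∑ b, ENNReal.ofReal (Pb b) * μ (compIFSd lam t b ⁻¹' S) := by
    intro S hS
    have h := St10.decomp_eval μ p (fun j => (hp j).le) _ hφmeas hss n S hS
    simp only [← hfoldIFS] at h
    rw [hPbdef]
    exact h
  have hssW : μ = ∑ b, ENNReal.ofReal (Pb b) • Measure.map (compIFSd lam t b) μ := by
    ext S hS
    rw [Measure.finset_sum_apply, hdecn S hS]
    exact Finset.sum_congr rfl fun b _ => by
      rw [Measure.smul_apply, Measure.map_apply (hgmeas b) hS, smul_eq_mul]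
  have hdecW : ∀ (k : ℕ) (S : Set (Fin d → ℝ)), MeasurableSet S →
      μ S = ∑ σ : Fin k → (Fin n → Fin (m+1)),
        ENNReal.ofReal (∏ i, Pb (σ i)) * μ ((St10.foldComp (compIFSd lam t) σ) ⁻¹' S) :=
    St10.decomp_eval μ Pb (fun b => (hPb0 b).le) _ hgmeas hssW
  have hQstep : ∀ (b) (S : Set (Fin d → ℝ)), MeasurableSet S →
      ENNReal.ofReal (Q b) * μ (compIFSd lam t b ⁻¹' S) ≤ μ S := by
    intro b S hS
    rw [hdecn S hS]
    have e1 : ENNReal.ofReal (Q b) * μ (compIFSd lam t b ⁻¹' S)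
        = ∑ b' ∈ Finset.univ.filter (fun b' => compIFSd lam t b' = compIFSd lam t b),
            ENNReal.ofReal (Pb b') * μ (compIFSd lam t b' ⁻¹' S) := by
      rw [hQdef, ENNReal.ofReal_sum_of_nonneg (fun b' _ => (hPb0 b').le), Finset.sum_mul]
      refine Finset.sum_congr rfl fun b' hb' => ?_
      rw [Finset.mem_filter] at hb'
      rw [hb'.2]
    rw [e1]
    exact Finset.sum_le_sum_of_subset (Finset.filter_subset _ _)
  have hIter := St10.iter_lower μ Q (fun b => (hQpos b).le) _ hgmeas hQstep
  have hfoldaff : ∀ (k : ℕ) (σ : Fin k → (Fin n → Fin (m+1))),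
      St10.IsAff (∏ i, ρr (σ i)) (St10.foldComp (compIFSd lam t) σ) :=
    fun k σ => St10.isAff_foldComp hgaff σ
  -- entropy identities
  have hEQ : ∑ b, Pb b * Real.logb 2 (Q b) = -H := by
    rw [hHdef, St10.entropy_group Pb (fun w => compIFSd lam t w), neg_neg, hQdef]
  have hLneg : ∀ j, Real.logb 2 |lam j| < 0 :=
    fun j => Real.logb_neg one_lt_two (abs_pos.mpr (hlam j).1) (hlam j).2
  have hχpos : 0 < χ := by
    rw [hχ]
    have h := Finset.sum_neg (fun j (_ : j ∈ Finset.univ) =>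
      mul_neg_of_pos_of_neg (hp j) (hLneg j)) Finset.univ_nonempty
    linarith
  have hnχpos : 0 < (n:ℝ) * χ := mul_pos (by linarith) hχpos
  have hEρ : ∑ b, Pb b * Real.logb 2 |ρr b| = -((n:ℝ) * χ) := by
    have h1 : ∀ b, Real.logb 2 |ρr b| = ∑ i, Real.logb 2 |lam (b i)| := by
      intro b
      rw [hρdef, Finset.abs_prod]
      exact Real.logb_prod _ _ (fun i _ => abs_ne_zero.mpr (hlam (b i)).1)
    simp_rw [h1, Finset.mul_sum]
    rw [Finset.sum_comm]
    have h2 : ∀ i : Fin n, ∑ b : Fin n → Fin (m+1), Pb b * Real.logb 2 |lam (b i)|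
        = ∑ j, p j * Real.logb 2 |lam j| := by
      intro i
      rw [hPbdef]
      simpa using St10.exp_coord p hp1 i (fun j => Real.logb 2 |lam j|)
    simp_rw [h2]
    rw [Finset.sum_const, Finset.card_univ, Fintype.card_fin, nsmul_eq_mul, hχ]
    ring
  have hH0 : 0 ≤ H := by
    have hsum : ∑ b, Pb b * Real.logb 2 (Q b) ≤ 0 :=
      Finset.sum_nonpos fun b _ => mul_nonpos_of_nonneg_of_nonpos (hPb0 b).le
        (Real.logb_nonpos one_lt_two (hQpos b).le (hQle1 b))
    linarith [hEQ]
  -- a closed ball of definite mass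
  obtain ⟨R, hR1, hRμ⟩ : ∃ R:ℝ, 1 ≤ R ∧
      ENNReal.ofReal (1/2) ≤ μ (Metric.closedBall (0 : Fin d → ℝ) R) := by
    have hmono : Monotone (fun N : ℕ => Metric.closedBall (0: Fin d → ℝ) N) :=
      fun i j hij => Metric.closedBall_subset_closedBall (by exact_mod_cast hij)
    have ht := MeasureTheory.tendsto_measure_iUnion_atTop (μ := μ) hmono
    rw [Metric.iUnion_closedBall_nat, measure_univ] at ht
    have hlt : ENNReal.ofReal (1/2) < 1 :=
      ENNReal.ofReal_lt_one.mpr (by norm_num)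
    obtain ⟨N, hN⟩ := (ht.eventually (eventually_gt_nhds hlt)).exists
    refine ⟨max (N:ℝ) 1, le_max_right _ _, le_trans hN.le (measure_mono
      (Metric.closedBall_subset_closedBall (le_max_left (N:ℝ) 1)))⟩
  have hR0 : (0:ℝ) < R := by linarith
  -- the key estimate
  have key : ∀ ε : ℝ, 0 < ε → ε < (n:ℝ) * χ → D ≤ (H + ε) / ((n:ℝ) * χ - ε) := by
    intro ε hε0 hεχ
    have ha : 0 < (n:ℝ)*χ - ε := by linarith
    -- variances
    set VQ : ℝ := ∑ b, Pb b * (Real.logb 2 (Q b) - ∑ b', Pb b' * Real.logb 2 (Q b'))^2 with hVQdef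
    set Vρ : ℝ := ∑ b, Pb b * (Real.logb 2 |ρr b| - ∑ b', Pb b' * Real.logb 2 |ρr b'|)^2 with hVρdef
    have hVQ0 : 0 ≤ VQ := Finset.sum_nonneg fun b _ => mul_nonneg (hPb0 b).le (sq_nonneg _)
    have hVρ0 : 0 ≤ Vρ := Finset.sum_nonneg fun b _ => mul_nonneg (hPb0 b).le (sq_nonneg _)
    -- good sets
    set Good : (k : ℕ) → Finset (Fin k → (Fin n → Fin (m+1))) := fun k =>
      Finset.univ.filter (fun σ =>
        ¬ ((k:ℝ) * ε < |∑ i, Real.logb 2 (Q (σ i)) - (k:ℝ) * (∑ b, Pb b * Real.logb 2 (Q b))|) ∧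
        ¬ ((k:ℝ) * ε < |∑ i, Real.logb 2 (abs (ρr (σ i))) - (k:ℝ) * (∑ b, Pb b * Real.logb 2 (abs (ρr b)))|))
      with hGood
    -- Chebyshev: total good weight
    have hgw : ∀ k : ℕ, 1 ≤ k → 1 - (VQ + Vρ)/(k * ε^2) ≤ ∑ σ ∈ Good k, ∏ i, Pb (σ i) := by
      intro k hk
      have hA := St10.chebyshev Pb (fun b => (hPb0 b).le) hPb1
        (fun b => Real.logb 2 (Q b)) k hk hε0
      have hB := St10.chebyshev Pb (fun b => (hPb0 b).le) hPb1
        (fun b => Real.logb 2 |ρr b|) k hk hε0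
      beta_reduce at hA hB
      rw [← hVQdef] at hA
      rw [← hVρdef] at hB
      have htot := St10.wt_sum Pb hPb1 k
      have hsplit := Finset.sum_filter_add_sum_filter_not
        (Finset.univ : Finset (Fin k → Fin n → Fin (m+1)))
        (fun σ =>
          ¬ ((k:ℝ) * ε < |∑ i, Real.logb 2 (Q (σ i)) - (k:ℝ) * (∑ b, Pb b * Real.logb 2 (Q b))|) ∧
          ¬ ((k:ℝ) * ε < |∑ i, Real.logb 2 (abs (ρr (σ i))) - (k:ℝ) * (∑ b, Pb b * Real.logb 2 (abs (ρr b)))|))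
        (fun σ => ∏ i, Pb (σ i))
      have hnot : ∑ σ ∈ Finset.univ.filter (fun σ : Fin k → Fin n → Fin (m+1) =>
          ¬ (¬ ((k:ℝ) * ε < |∑ i, Real.logb 2 (Q (σ i)) - (k:ℝ) * (∑ b, Pb b * Real.logb 2 (Q b))|) ∧
             ¬ ((k:ℝ) * ε < |∑ i, Real.logb 2 (abs (ρr (σ i))) - (k:ℝ) * (∑ b, Pb b * Real.logb 2 (abs (ρr b)))|))),
            ∏ i, Pb (σ i)
          ≤ VQ/(k*ε^2) + Vρ/(k*ε^2) := by
        have hsub : Finset.univ.filter (fun σ : Fin k → Fin n → Fin (m+1) =>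
            ¬ (¬ ((k:ℝ) * ε < |∑ i, Real.logb 2 (Q (σ i)) - (k:ℝ) * (∑ b, Pb b * Real.logb 2 (Q b))|) ∧
               ¬ ((k:ℝ) * ε < |∑ i, Real.logb 2 (abs (ρr (σ i))) - (k:ℝ) * (∑ b, Pb b * Real.logb 2 (abs (ρr b)))|)))
            ⊆ (Finset.univ.filter (fun σ : Fin k → Fin n → Fin (m+1) =>
                (k:ℝ) * ε < |∑ i, Real.logb 2 (Q (σ i)) - (k:ℝ) * (∑ b, Pb b * Real.logb 2 (Q b))|))
              ∪ (Finset.univ.filter (fun σ : Fin k → Fin n → Fin (m+1) =>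
                (k:ℝ) * ε < |∑ i, Real.logb 2 (abs (ρr (σ i))) - (k:ℝ) * (∑ b, Pb b * Real.logb 2 (abs (ρr b)))|)) := by
          intro σ hσ
          simp only [Finset.mem_filter, Finset.mem_union, Finset.mem_univ, true_and] at *
          tauto
        have hnn : ∀ σ ∈ (Finset.univ.filter (fun σ : Fin k → Fin n → Fin (m+1) =>
                (k:ℝ) * ε < |∑ i, Real.logb 2 (Q (σ i)) - (k:ℝ) * (∑ b, Pb b * Real.logb 2 (Q b))|))
              ∪ (Finset.univ.filter (fun σ : Fin k → Fin n → Fin (m+1) =>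
                (k:ℝ) * ε < |∑ i, Real.logb 2 (abs (ρr (σ i))) - (k:ℝ) * (∑ b, Pb b * Real.logb 2 (abs (ρr b)))|)),
            (0:ℝ) ≤ ∏ i, Pb (σ i) :=
          fun σ _ => Finset.prod_nonneg fun i _ => (hPb0 (σ i)).le
        have h1 := Finset.sum_le_sum_of_subset_of_nonneg hsub (fun σ h _ => hnn σ h)
        have h2 := Finset.sum_union_inter
          (s₁ := Finset.univ.filter (fun σ : Fin k → Fin n → Fin (m+1) =>
                (k:ℝ) * ε < |∑ i, Real.logb 2 (Q (σ i)) - (k:ℝ) * (∑ b, Pb b * Real.logb 2 (Q b))|))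
          (s₂ := Finset.univ.filter (fun σ : Fin k → Fin n → Fin (m+1) =>
                (k:ℝ) * ε < |∑ i, Real.logb 2 (abs (ρr (σ i))) - (k:ℝ) * (∑ b, Pb b * Real.logb 2 (abs (ρr b)))|))
          (f := fun σ => ∏ i, Pb (σ i))
        have h3 : (0:ℝ) ≤ ∑ σ ∈ (Finset.univ.filter (fun σ : Fin k → Fin n → Fin (m+1) =>
                (k:ℝ) * ε < |∑ i, Real.logb 2 (Q (σ i)) - (k:ℝ) * (∑ b, Pb b * Real.logb 2 (Q b))|))
              ∩ (Finset.univ.filter (fun σ : Fin k → Fin n → Fin (m+1) =>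
                (k:ℝ) * ε < |∑ i, Real.logb 2 (abs (ρr (σ i))) - (k:ℝ) * (∑ b, Pb b * Real.logb 2 (abs (ρr b)))|)),
            ∏ i, Pb (σ i) :=
          Finset.sum_nonneg fun σ _ => Finset.prod_nonneg fun i _ => (hPb0 (σ i)).le
        linarith [hA, hB, h1, h2, h3]
      simp only [hGood]
      have hdiv : VQ/(k*ε^2) + Vρ/(k*ε^2) = (VQ+Vρ)/(k*ε^2) := by rw [← add_div]
      linarith [hsplit, htot, hnot]
    -- threshold K₁
    obtain ⟨K₁, hK₁⟩ : ∃ K₁ : ℕ, ∀ k : ℕ, K₁ ≤ k →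
        (1 ≤ k ∧ (VQ + Vρ)/(k * ε^2) ≤ 1/4) := by
      refine ⟨Nat.ceil ((VQ + Vρ) * 4 / ε^2) + 1, fun k hkk => ?_⟩
      have hk1n : 1 ≤ k := le_trans (Nat.le_add_left 1 _) hkk
      refine ⟨hk1n, ?_⟩
      have hk1 : (1:ℝ) ≤ k := by exact_mod_cast hk1n
      have hkR : ((VQ+Vρ) * 4 / ε^2 : ℝ) ≤ k := by
        refine le_trans (Nat.le_ceil _) ?_
        have h6 : (Nat.ceil ((VQ + Vρ) * 4 / ε^2) : ℕ) ≤ k :=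
          le_trans (Nat.le_succ _) hkk
        exact_mod_cast h6
      have hε2 : (0:ℝ) < ε^2 := by positivity
      have h4 : (VQ+Vρ) * 4 ≤ k * ε^2 := by
        have := (div_le_iff₀ hε2).mp hkR
        linarith
      rw [div_le_iff₀ (by nlinarith)]
      nlinarith
    -- the sets S_k
    set SS : ℕ → Set (Fin d → ℝ) := fun k =>
      ⋃ σ ∈ Good k, St10.foldComp (compIFSd lam t) σ '' Metric.closedBall 0 R with hSSdef
    have hSmeas : ∀ k, MeasurableSet (SS k) := by
      intro k
      simp only [hSSdef]
      refine (Good k).measurableSet_biUnion ?_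
      intro σ _
      exact ((isCompact_closedBall _ _).image (hfoldaff k σ).continuous).isClosed.measurableSet
    have hSSμ : ∀ k, 1 ≤ k → K₁ ≤ k →
        ENNReal.ofReal (3/4) * ENNReal.ofReal (1/2) ≤ μ (SS k) := by
      intro k hk1 hkK
      rw [hdecW k (SS k) (hSmeas k)]
      have hterm : ∀ σ ∈ Good k, ENNReal.ofReal (∏ i, Pb (σ i)) * ENNReal.ofReal (1/2)
          ≤ ENNReal.ofReal (∏ i, Pb (σ i)) * μ (St10.foldComp (compIFSd lam t) σ ⁻¹' SS k) := by
        intro σ hσ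
        apply mul_le_mul_right
        refine le_trans hRμ (measure_mono ?_)
        intro y hy
        refine Set.mem_preimage.mpr ?_
        simp only [hSSdef]
        exact Set.mem_biUnion hσ (Set.mem_image_of_mem _ hy)
      calc ENNReal.ofReal (3/4) * ENNReal.ofReal (1/2)
          ≤ ENNReal.ofReal (∑ σ ∈ Good k, ∏ i, Pb (σ i)) * ENNReal.ofReal (1/2) := by
            apply mul_le_mul_left
            apply ENNReal.ofReal_le_ofReal
            have h1 := hgw k hk1
            have h2 := (hK₁ k hkK).2
            linarith
        _ = ∑ σ ∈ Good k, ENNReal.ofReal (∏ i, Pb (σ i)) * ENNReal.ofReal (1/2) := by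
            rw [ENNReal.ofReal_sum_of_nonneg
              (fun σ _ => Finset.prod_nonneg fun i _ => (hPb0 (σ i)).le), Finset.sum_mul]
        _ ≤ ∑ σ ∈ Good k, ENNReal.ofReal (∏ i, Pb (σ i))
              * μ (St10.foldComp (compIFSd lam t) σ ⁻¹' SS k) := Finset.sum_le_sum hterm
        _ ≤ ∑ σ : Fin k → Fin n → Fin (m+1), ENNReal.ofReal (∏ i, Pb (σ i))
              * μ (St10.foldComp (compIFSd lam t) σ ⁻¹' SS k) := by
            simp only [hGood]
            exact Finset.sum_le_sum_of_subset (Finset.filter_subset _ _)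
    -- positive measure limsup set
    have hTmeas : ∀ K : ℕ, MeasurableSet (⋃ k, ⋃ (_ : K ≤ k), SS k) :=
      fun K => MeasurableSet.iUnion fun k => MeasurableSet.iUnion fun _ => hSmeas k
    have hμT : ENNReal.ofReal (3/4) * ENNReal.ofReal (1/2)
        ≤ μ (⋂ K : ℕ, ⋃ k, ⋃ (_ : K ≤ k), SS k) := by
      have hdir : Directed (· ⊇ ·) (fun K : ℕ => ⋃ k, ⋃ (_ : K ≤ k), SS k) := by
        intro K K'
        refine ⟨max K K', fun x hx => ?_, fun x hx => ?_⟩ <;>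
        · simp only [Set.mem_iUnion] at hx ⊢
          obtain ⟨k, hk, hxk⟩ := hx
          exact ⟨k, by omega, hxk⟩
      rw [Antitone.measure_iInter (fun K K' hKK' x hx => by
          simp only [Set.mem_iUnion] at hx ⊢
          obtain ⟨k, hk, hxk⟩ := hx
          exact ⟨k, le_trans hKK' hk, hxk⟩) (fun K => (hTmeas K).nullMeasurableSet) ⟨0, measure_ne_top μ _⟩]
      refine le_iInf fun K => ?_
      refine le_trans (hSSμ (max K (max K₁ 1))
        (le_max_of_le_right (le_max_right _ _)) (le_max_of_le_right (le_max_left _ _)))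
        (measure_mono ?_)
      intro y hy
      simp only [Set.mem_iUnion]
      exact ⟨max K (max K₁ 1), le_max_left _ _, hy⟩
    -- pick a good generic point
    have hnull : μ {x | ¬ Filter.Tendsto
        (fun δ : ℝ => Real.logb 2 (μ (Metric.ball x δ)).toReal / Real.logb 2 δ)
        (nhdsWithin 0 (Set.Ioi 0)) (nhds D)} = 0 := by
      exact (MeasureTheory.ae_iff).mp hdim
    obtain ⟨x, hxT, hxdim⟩ : ∃ x, x ∈ (⋂ K : ℕ, ⋃ k, ⋃ (_ : K ≤ k), SS k) ∧
        Filter.Tendsto (fun δ : ℝ => Real.logb 2 (μ (Metric.ball x δ)).toReal / Real.logb 2 δ)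
        (nhdsWithin 0 (Set.Ioi 0)) (nhds D) := by
      by_contra hcon
      push_neg at hcon
      have hsub : (⋂ K : ℕ, ⋃ k, ⋃ (_ : K ≤ k), SS k) ⊆ {x | ¬ Filter.Tendsto
          (fun δ : ℝ => Real.logb 2 (μ (Metric.ball x δ)).toReal / Real.logb 2 δ)
          (nhdsWithin 0 (Set.Ioi 0)) (nhds D)} := fun x hx => hcon x hx
      have hT0 : μ (⋂ K : ℕ, ⋃ k, ⋃ (_ : K ≤ k), SS k) = 0 :=
        measure_mono_null hsub hnull
      have hpos : (0:ENNReal) < ENNReal.ofReal (3/4) * ENNReal.ofReal (1/2) :=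
        ENNReal.mul_pos (ne_of_gt (ENNReal.ofReal_pos.mpr (by norm_num)))
          (ne_of_gt (ENNReal.ofReal_pos.mpr (by norm_num)))
      have h2 := lt_of_lt_of_le hpos hμT
      rw [hT0] at h2
      exact lt_irrefl 0 h2
    -- extract scales
    have hxT' : ∀ K : ℕ, ∃ k, K ≤ k ∧ x ∈ SS k := by
      intro K
      have := Set.mem_iInter.mp hxT K
      simpa [Set.mem_iUnion] using this
    choose kf hkf hkx using hxT'
    have hσex : ∀ K, ∃ σ, σ ∈ Good (kf K) ∧
        x ∈ St10.foldComp (compIFSd lam t) σ '' Metric.closedBall 0 R := by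
      intro K
      have hx := hkx K
      simp only [hSSdef] at hx
      simpa [Set.mem_iUnion] using hx
    choose σf hσfG hσfx using hσex
    -- the radii
    set r : ℕ → ℝ := fun K => 3 * R * |∏ i, ρr (σf K i)| with hrdef
    have hPR0 : ∀ K, (∏ i, ρr (σf K i)) ≠ 0 :=
      fun K => Finset.prod_ne_zero_iff.mpr fun i _ => hρ0 _
    have hr0 : ∀ K, 0 < r K := by
      intro K
      simp only [hrdef]
      exact mul_pos (by linarith) (abs_pos.mpr (hPR0 K))
    -- unpack goodness
    have hGQ : ∀ K,
        |∑ i, Real.logb 2 (Q (σf K i)) - (kf K:ℝ) * (∑ b, Pb b * Real.logb 2 (Q b))| ≤ kf K * ε ∧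
        |∑ i, Real.logb 2 (abs (ρr (σf K i))) - (kf K:ℝ) * (∑ b, Pb b * Real.logb 2 (abs (ρr b)))| ≤ kf K * ε := by
      intro K
      have h := hσfG K
      simp only [hGood] at h
      simp only [Finset.mem_filter, Finset.mem_univ, true_and] at h
      exact ⟨not_lt.mp h.1, not_lt.mp h.2⟩
    have hSQ : ∀ K, -((kf K:ℝ) * (H + ε)) ≤ ∑ i, Real.logb 2 (Q (σf K i)) := by
      intro K
      have h := (hGQ K).1
      rw [hEQ] at h
      have h2 := (abs_le.mp h).1
      nlinarith [h2]
    have hSρ : ∀ K, ∑ i, Real.logb 2 |ρr (σf K i)| ≤ -((kf K:ℝ) * ((n:ℝ)*χ - ε)) := by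
      intro K
      have h := (hGQ K).2
      rw [hEρ] at h
      have h2 := (abs_le.mp h).2
      nlinarith [h2]
    -- measure of balls
    have hball : ∀ K, ENNReal.ofReal ((∏ i, Q (σf K i)) * (1/2)) ≤ μ (Metric.ball x (r K)) := by
      intro K
      obtain ⟨z, hz, hfz⟩ := hσfx K
      have hzn : ‖z‖ ≤ R := by
        simpa [Metric.mem_closedBall, dist_zero_right] using hz
      have hsub := St10.IsAff.cball_subset (hfoldaff _ (σf K)) (hPR0 K) hzn hR0
      rw [hfz] at hsub
      have h1 := hIter (kf K) (σf K)
        (Metric.ball x (3*R*|∏ i, ρr (σf K i)|)) Metric.isOpen_ball.measurableSet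
      simp only [hrdef]
      refine le_trans ?_ h1
      rw [ENNReal.ofReal_mul (Finset.prod_nonneg fun i _ => (hQpos (σf K i)).le)]
      apply mul_le_mul_right
      exact le_trans hRμ (measure_mono hsub)
    have hμfin : ∀ K, μ (Metric.ball x (r K)) ≠ ⊤ := fun K => measure_ne_top μ _
    have hμlow : ∀ K, -(1 + (kf K:ℝ) * (H + ε))
        ≤ Real.logb 2 ((μ (Metric.ball x (r K))).toReal) := by
      intro K
      have h2 : (∏ i, Q (σf K i)) * (1/2) ≤ (μ (Metric.ball x (r K))).toReal :=
        (ENNReal.ofReal_le_iff_le_toReal (hμfin K)).mp (hball K)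
      have hQprodpos : 0 < ∏ i, Q (σf K i) :=
        Finset.prod_pos fun i _ => hQpos (σf K i)
      have h3 : Real.logb 2 ((∏ i, Q (σf K i)) * (1/2))
          ≤ Real.logb 2 ((μ (Metric.ball x (r K))).toReal) :=
        Real.logb_le_logb_of_le one_lt_two (by positivity) h2
      have h4 : Real.logb 2 ((∏ i, Q (σf K i)) * (1/2))
          = (∑ i, Real.logb 2 (Q (σf K i))) - 1 := by
        rw [Real.logb_mul (ne_of_gt hQprodpos) (by norm_num)]
        rw [Real.logb_prod _ _ (fun i _ => ne_of_gt (hQpos (σf K i)))]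
        have : Real.logb 2 (1/2) = -1 := by
          rw [one_div, Real.logb_inv, Real.logb_self_eq_one one_lt_two]
        rw [this]
        ring
      have h5 := hSQ K
      rw [h4] at h3
      linarith
    have hμup : ∀ K, Real.logb 2 ((μ (Metric.ball x (r K))).toReal) ≤ 0 := by
      intro K
      apply Real.logb_nonpos one_lt_two ENNReal.toReal_nonneg
      have h1 : μ (Metric.ball x (r K)) ≤ 1 := prob_le_one
      calc (μ (Metric.ball x (r K))).toReal ≤ (1:ENNReal).toReal :=
        ENNReal.toReal_mono (by norm_num) h1
        _ = 1 := by simp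
    have hrlogup : ∀ K, Real.logb 2 (r K)
        ≤ Real.logb 2 (3*R) - (kf K:ℝ) * ((n:ℝ)*χ - ε) := by
      intro K
      simp only [hrdef]
      have h1 : Real.logb 2 (3*R*|∏ i, ρr (σf K i)|)
          = Real.logb 2 (3*R) + Real.logb 2 |∏ i, ρr (σf K i)| :=
        Real.logb_mul (by nlinarith) (abs_ne_zero.mpr (hPR0 K))
      have h2 : Real.logb 2 |∏ i, ρr (σf K i)| = ∑ i, Real.logb 2 |ρr (σf K i)| := by
        rw [Finset.abs_prod]
        exact Real.logb_prod _ _ (fun i _ => abs_ne_zero.mpr (hρ0 _))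
      have h3 := hSρ K
      rw [h1, h2]
      linarith
    -- r tends to 0
    have hrle : ∀ K : ℕ, r K ≤ (2:ℝ) ^ (Real.logb 2 (3*R) - K * ((n:ℝ)*χ - ε)) := by
      intro K
      have hkK : (K:ℝ) ≤ kf K := by exact_mod_cast hkf K
      have h1 : Real.logb 2 (r K) ≤ Real.logb 2 (3*R) - K * ((n:ℝ)*χ-ε) := by
        have := hrlogup K
        nlinarith
      calc r K = (2:ℝ) ^ (Real.logb 2 (r K)) :=
          (Real.rpow_logb two_pos (by norm_num) (hr0 K)).symm
        _ ≤ _ := Real.rpow_le_rpow_of_exponent_le one_le_two h1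
    have hrt0 : Filter.Tendsto r Filter.atTop (nhds 0) := by
      apply squeeze_zero (fun K => (hr0 K).le) hrle
      have hexp : Filter.Tendsto
          (fun K : ℕ => Real.logb 2 (3*R) - (K:ℝ) * ((n:ℝ)*χ - ε))
          Filter.atTop Filter.atBot := by
        have h1 : Filter.Tendsto (fun K : ℕ => (K:ℝ) * ((n:ℝ)*χ - ε))
            Filter.atTop Filter.atTop :=
          Filter.Tendsto.atTop_mul_const ha tendsto_natCast_atTop_atTop
        have h2 : Filter.Tendsto (fun K : ℕ => -((K:ℝ) * ((n:ℝ)*χ - ε)))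
            Filter.atTop Filter.atBot := Filter.tendsto_neg_atBot_iff.mpr h1
        have h3 := Filter.tendsto_atBot_add_const_left Filter.atTop (Real.logb 2 (3*R)) h2
        simpa [sub_eq_add_neg] using h3
      have h2t : Filter.Tendsto (fun y : ℝ => (2:ℝ)^y) Filter.atBot (nhds 0) := by
        have he : ∀ y : ℝ, (2:ℝ)^y = Real.exp (Real.log 2 * y) := fun y => by
          rw [Real.rpow_def_of_pos two_pos]
        simp_rw [he]
        apply Real.tendsto_exp_atBot.comp
        exact Filter.Tendsto.const_mul_atBot (Real.log_pos one_lt_two) Filter.tendsto_id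
      exact h2t.comp hexp
    have hrt0' : Filter.Tendsto r Filter.atTop (nhdsWithin 0 (Set.Ioi 0)) :=
      tendsto_nhdsWithin_of_tendsto_nhds_of_eventually_within r hrt0
        (Filter.Eventually.of_forall fun K => Set.mem_Ioi.mpr (hr0 K))
    have hratio : Filter.Tendsto
        (fun K => Real.logb 2 ((μ (Metric.ball x (r K))).toReal) / Real.logb 2 (r K))
        Filter.atTop (nhds D) := hxdim.comp hrt0'
    -- threshold K₂ and the eventual bound
    obtain ⟨K₂, hK₂⟩ : ∃ K₂ : ℕ, ∀ k : ℕ, K₂ ≤ k →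
        Real.logb 2 (3*R) + 1 ≤ (k:ℝ) * ((n:ℝ)*χ - ε) := by
      refine ⟨Nat.ceil ((Real.logb 2 (3*R) + 1) / ((n:ℝ)*χ - ε)), fun k hkk => ?_⟩
      have h1 : ((Real.logb 2 (3*R) + 1) / ((n:ℝ)*χ - ε)) ≤ k :=
        le_trans (Nat.le_ceil _) (by exact_mod_cast hkk)
      calc Real.logb 2 (3*R) + 1
          = ((Real.logb 2 (3*R) + 1) / ((n:ℝ)*χ - ε)) * ((n:ℝ)*χ - ε) := by
            field_simp
        _ ≤ (k:ℝ) * ((n:ℝ)*χ - ε) := by nlinarith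
    have hbound : ∀ᶠ K in Filter.atTop,
        Real.logb 2 ((μ (Metric.ball x (r K))).toReal) / Real.logb 2 (r K)
          ≤ (1 + (kf K:ℝ)*(H+ε)) / ((kf K:ℝ)*((n:ℝ)*χ-ε) - Real.logb 2 (3*R)) := by
      filter_upwards [Filter.eventually_ge_atTop K₂] with K hK
      have hkb : Real.logb 2 (3*R) + 1 ≤ (kf K:ℝ) * ((n:ℝ)*χ - ε) :=
        hK₂ (kf K) (le_trans hK (hkf K))
      have hv := hrlogup K
      have hvneg : Real.logb 2 (r K) < 0 := by linarith
      have hu1 := hμlow K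
      have hu2 := hμup K
      have hnum : 0 ≤ 1 + (kf K:ℝ)*(H+ε) := by
        have h9 := Nat.cast_nonneg (α := ℝ) (kf K)
        nlinarith
      have hbpos : (0:ℝ) < -(Real.logb 2 (r K)) := by linarith
      have e1 : Real.logb 2 ((μ (Metric.ball x (r K))).toReal) / Real.logb 2 (r K)
          = (-(Real.logb 2 ((μ (Metric.ball x (r K))).toReal))) / (-(Real.logb 2 (r K))) := by
        rw [neg_div_neg_eq]
      rw [e1]
      have hstep1 : (-(Real.logb 2 ((μ (Metric.ball x (r K))).toReal))) / (-(Real.logb 2 (r K)))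
          ≤ (1 + (kf K:ℝ)*(H+ε)) / (-(Real.logb 2 (r K))) :=
        (div_le_div_iff_of_pos_right hbpos).mpr (by linarith)
      have hstep2 : (1 + (kf K:ℝ)*(H+ε)) / (-(Real.logb 2 (r K)))
          ≤ (1 + (kf K:ℝ)*(H+ε)) / ((kf K:ℝ)*((n:ℝ)*χ-ε) - Real.logb 2 (3*R)) :=
        div_le_div_of_nonneg_left hnum (by linarith) (by linarith)
      exact le_trans hstep1 hstep2
    -- the bound converges to (H+ε)/(nχ-ε)
    have hkat : Filter.Tendsto (fun K => (kf K : ℝ)) Filter.atTop Filter.atTop :=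
      Filter.tendsto_atTop_mono (fun K => by exact_mod_cast hkf K) tendsto_natCast_atTop_atTop
    have hgen : Filter.Tendsto
        (fun y : ℝ => (1 + y*(H+ε)) / (y*((n:ℝ)*χ-ε) - Real.logb 2 (3*R)))
        Filter.atTop (nhds ((H+ε)/((n:ℝ)*χ-ε))) := by
      have h1 : Filter.Tendsto
          (fun y : ℝ => (y⁻¹ + (H+ε)) / (((n:ℝ)*χ-ε) - Real.logb 2 (3*R) * y⁻¹))
          Filter.atTop (nhds ((0 + (H+ε)) / (((n:ℝ)*χ-ε) - Real.logb 2 (3*R) * 0))) := by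
        apply Filter.Tendsto.div
        · exact tendsto_inv_atTop_zero.add tendsto_const_nhds
        · exact tendsto_const_nhds.sub (tendsto_inv_atTop_zero.const_mul _)
        · simpa using ne_of_gt ha
      have h2 : ∀ᶠ y : ℝ in Filter.atTop,
          (y⁻¹ + (H+ε)) / (((n:ℝ)*χ-ε) - Real.logb 2 (3*R) * y⁻¹)
          = (1 + y*(H+ε)) / (y*((n:ℝ)*χ-ε) - Real.logb 2 (3*R)) := by
        filter_upwards [Filter.eventually_gt_atTop 0] with y hy
        have hy0 : y ≠ 0 := ne_of_gt hy
        have hdy : ∀ a b : ℝ, (a/y)/(b/y) = a/b := by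
          intro a b
          rcases eq_or_ne b 0 with h|h
          · simp [h]
          · field_simp
        rw [show (y⁻¹ + (H+ε)) = (1 + y*(H+ε))/y by field_simp]
        rw [show (((n:ℝ)*χ-ε) - Real.logb 2 (3*R) * y⁻¹)
            = (y*((n:ℝ)*χ-ε) - Real.logb 2 (3*R))/y by field_simp]
        exact hdy _ _
      have h3 := Filter.Tendsto.congr' h2 h1
      simpa using h3
    have hbt : Filter.Tendsto
        (fun K => (1 + (kf K:ℝ)*(H+ε)) / ((kf K:ℝ)*((n:ℝ)*χ-ε) - Real.logb 2 (3*R)))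
        Filter.atTop (nhds ((H+ε)/((n:ℝ)*χ-ε))) := hgen.comp hkat
    exact le_of_tendsto_of_tendsto hratio hbt hbound
  -- conclusion by letting ε → 0
  have htends : Filter.Tendsto (fun ε : ℝ => (H + ε) / ((n:ℝ)*χ - ε))
      (nhdsWithin 0 (Set.Ioi 0)) (nhds (H / ((n:ℝ)*χ))) := by
    have hc : ContinuousAt (fun ε : ℝ => (H + ε) / ((n:ℝ)*χ - ε)) 0 := by
      apply ContinuousAt.div
      · fun_prop
      · fun_prop
      · simpa using ne_of_gt hnχpos
    have := hc.tendsto.mono_left (nhdsWithin_le_nhds (s := Set.Ioi (0:ℝ)))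
    simpa using this
  have hev : ∀ᶠ ε in nhdsWithin (0:ℝ) (Set.Ioi 0), D ≤ (H + ε) / ((n:ℝ)*χ - ε) := by
    filter_upwards [Ioo_mem_nhdsGT_of_mem (Set.mem_Ico.mpr ⟨le_refl (0:ℝ), hnχpos⟩)] with ε hε
    exact key ε hε.1 hε.2
  have hDle : D ≤ H / ((n:ℝ)*χ) := ge_of_tendsto htends hev
  have heq : 1 / (χ * (n:ℝ)) * H = H / ((n:ℝ)*χ) := by ring
  rw [heq]
  exact hDle
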